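/- The function G₃(ρ, v, m) := −(v − m) · (v + (0, 1+ρ)) + |v − m|²/2 is Λ-convex (for every z₀ ∈ ℝ × ℝ² × ℝ² and z ∈ Λ, the map t ↦ G₃(z₀ + tz) is convex) and G₃ vanishes on K. -/
import Mathlib


open MeasureTheory

noncomputable section

/-- Euclidean dot product on ℝ². -/
def dot (a b : ℝ × ℝ) : ℝ := a.1 * b.1 + a.2 * b.2

/-- Rotation by 90°: (a,b)⊥ = (−b, a). -/
def perp (a : ℝ × ℝ) : ℝ × ℝ := (-a.2, a.1)

/-- Euclidean norm on ℝ². -/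
def nrm (a : ℝ × ℝ) : ℝ := Real.sqrt (a.1 ^ 2 + a.2 ^ 2)

/-- State space ℝ × ℝ² × ℝ² of (ρ, v, m). -/
abbrev Pt := ℝ × (ℝ × ℝ) × (ℝ × ℝ)

/-- The wave cone Λ of stationary IPM. -/
def Lam : Set Pt :=
  {z | dot z.2.1 z.2.1 + z.1 * z.2.1.2 = 0 ∧ dot z.2.2 (perp z.2.1) = 0 ∧
       dot z.2.2 (z.2.1 + (0, z.1)) = 0}

/-- The constitutive set K. -/
def Kset : Set Pt := {z | |z.1| = 1 ∧ z.2.2 = z.1 • z.2.1}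

def G2 (z : Pt) : ℝ := dot z.2.2 (perp z.2.1)

def G3 (z : Pt) : ℝ :=
  -dot (z.2.1 - z.2.2) (z.2.1 + (0, 1 + z.1)) + dot (z.2.1 - z.2.2) (z.2.1 - z.2.2) / 2

def G4 (z : Pt) : ℝ :=
  -dot (z.2.1 + z.2.2) (z.2.1 - (0, 1 - z.1)) + dot (z.2.1 + z.2.2) (z.2.1 + z.2.2) / 2

theorem stmt4 :
    (∀ z₀ : Pt, ∀ z ∈ Lam, ConvexOn ℝ Set.univ (fun t : ℝ => G3 (z₀ + t • z))) ∧
    (∀ z ∈ Kset, G3 z = 0) := by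
  constructor
  · rintro ⟨r0, ⟨p1, p2⟩, ⟨q1, q2⟩⟩ ⟨r, ⟨a1, a2⟩, ⟨b1, b2⟩⟩ ⟨h1, h2, h3⟩
    simp only [Lam, dot, perp, Set.mem_setOf_eq, Prod.mk_add_mk] at h1 h2 h3
    have key : (fun t : ℝ => G3 ((r0, (p1, p2), (q1, q2)) + t • (r, (a1, a2), (b1, b2)))) =
        fun t : ℝ =>
          (-((p1 - q1) * (p1 + 0) + (p2 - q2) * (p2 + (1 + r0))) +
              ((p1 - q1) * (p1 - q1) + (p2 - q2) * (p2 - q2)) / 2) +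
          (-((a1 - b1) * (p1 + 0) + (a2 - b2) * (p2 + (1 + r0)))
            - ((p1 - q1) * a1 + (p2 - q2) * (a2 + r))
            + ((p1 - q1) * (a1 - b1) + (p2 - q2) * (a2 - b2))) * t +
          (((a1 - b1) ^ 2 + (a2 - b2) ^ 2) / 2) * t ^ 2 := by
      funext t
      simp only [G3, dot, Prod.mk_add_mk, Prod.smul_mk, smul_eq_mul, Prod.fst_add, Prod.snd_add,
        Prod.fst, Prod.snd, Prod.mk_sub_mk]
      linear_combination (-t ^ 2) * h1 + t ^ 2 * h3
    rw [key]
    set A := (-((p1 - q1) * (p1 + 0) + (p2 - q2) * (p2 + (1 + r0))) +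
              ((p1 - q1) * (p1 - q1) + (p2 - q2) * (p2 - q2)) / 2) with hA
    set B := (-((a1 - b1) * (p1 + 0) + (a2 - b2) * (p2 + (1 + r0)))
            - ((p1 - q1) * a1 + (p2 - q2) * (a2 + r))
            + ((p1 - q1) * (a1 - b1) + (p2 - q2) * (a2 - b2))) with hB
    set C := (((a1 - b1) ^ 2 + (a2 - b2) ^ 2) / 2) with hC
    have hC0 : 0 ≤ C := by positivity
    refine ⟨convex_univ, ?_⟩
    intro x _ y _ a b ha hb hab
    simp only [smul_eq_mul]
    have hb' : b = 1 - a := by linarith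
    subst hb'
    nlinarith [mul_nonneg (mul_nonneg (mul_nonneg hC0 ha) hb) (sq_nonneg (x - y))]
  · rintro ⟨r, ⟨v1, v2⟩, ⟨m1, m2⟩⟩ ⟨hr, hm⟩
    simp only [Prod.mk.injEq, Prod.smul_mk, smul_eq_mul] at hm
    have hr2 : r ^ 2 = 1 := by
      have := sq_abs r
      rw [hr] at this; linarith
    simp only [G3, dot, Prod.mk_sub_mk, Prod.mk_add_mk]
    rw [hm.1, hm.2]
    linear_combination ((v1 ^ 2 + v2 ^ 2) / 2 + v2) * hr2
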